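/- For n = 3^k, there exists a bijection φ : {0,1}^{n-1} → A_k = {x ∈ {0,1}^n : RecMaj_k(x) = 1} with average stretch avgStretch(φ) ≤ 20. -/

import Mathlib

open Finset

/-- The average stretch of a map `φ : {0,1}^n → {0,1}^m`. -/
noncomputable def avgStretch (n : ℕ) {m : ℕ} (φ : (Fin n → Bool) → (Fin m → Bool)) : ℝ :=
  (∑ x : Fin n → Bool, ∑ i : Fin n,
    (hammingDist (φ x) (φ (Function.update x i (!(x i)))) : ℝ)) / (2 ^ n * n)

/-- Majority of three bits. -/
def maj3 (a b c : Bool) : Bool := (a && b) || (a && c) || (b && c)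

/-- Recursive majority of 3's on `3^k` bits. -/
def recMaj : ∀ k : ℕ, (Fin (3 ^ k) → Bool) → Bool
  | 0, x => x ⟨0, by norm_num⟩
  | k + 1, x =>
    let b : Fin 3 → Bool := fun r =>
      recMaj k (fun i => x ⟨r * 3 ^ k + i, by
        have hi := i.isLt
        have hr : (r : ℕ) ≤ 2 := Nat.lt_succ_iff.mp r.isLt
        have hm : (r : ℕ) * 3 ^ k ≤ 2 * 3 ^ k := Nat.mul_le_mul_right _ hr
        have h3 : (3 : ℕ) ^ (k + 1) = 3 ^ k * 3 := pow_succ 3 k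
        omega⟩)
    maj3 (b 0) (b 1) (b 2)

namespace Stmt17Aux

def TIdx : ℕ → Type
  | 0 => Unit
  | k + 1 => TIdx k ⊕ (TIdx k ⊕ TIdx k)

def SIdx : ℕ → Type
  | 0 => Empty
  | k + 1 => SIdx k ⊕ (SIdx k ⊕ (TIdx k ⊕ Unit))

instance instFintypeTIdx : ∀ k, Fintype (TIdx k)
  | 0 => inferInstanceAs (Fintype Unit)
  | k + 1 =>
    letI := instFintypeTIdx k
    inferInstanceAs (Fintype (TIdx k ⊕ (TIdx k ⊕ TIdx k)))

instance instDecEqTIdx : ∀ k, DecidableEq (TIdx k)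
  | 0 => inferInstanceAs (DecidableEq Unit)
  | k + 1 =>
    letI := instDecEqTIdx k
    inferInstanceAs (DecidableEq (TIdx k ⊕ (TIdx k ⊕ TIdx k)))

instance instFintypeSIdx : ∀ k, Fintype (SIdx k)
  | 0 => inferInstanceAs (Fintype Empty)
  | k + 1 =>
    letI := instFintypeSIdx k
    inferInstanceAs (Fintype (SIdx k ⊕ (SIdx k ⊕ (TIdx k ⊕ Unit))))

instance instDecEqSIdx : ∀ k, DecidableEq (SIdx k)
  | 0 => inferInstanceAs (DecidableEq Empty)
  | k + 1 =>
    letI := instDecEqSIdx k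
    inferInstanceAs (DecidableEq (SIdx k ⊕ (SIdx k ⊕ (TIdx k ⊕ Unit))))

lemma card_TIdx : ∀ k, Fintype.card (TIdx k) = 3 ^ k
  | 0 => rfl
  | k + 1 => by
    have h := card_TIdx k
    show Fintype.card (TIdx k ⊕ (TIdx k ⊕ TIdx k)) = 3 ^ (k + 1)
    simp [Fintype.card_sum, h, pow_succ]; ring

lemma card_SIdx : ∀ k, Fintype.card (SIdx k) = 3 ^ k - 1
  | 0 => rfl
  | k + 1 => by
    have h := card_SIdx k
    have h' := card_TIdx k
    have h1 : 1 ≤ 3 ^ k := Nat.one_le_pow _ _ (by norm_num)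
    show Fintype.card (SIdx k ⊕ (SIdx k ⊕ (TIdx k ⊕ Unit))) = 3 ^ (k + 1) - 1
    simp only [Fintype.card_sum, h, h', Fintype.card_unit, pow_succ]
    omega

/-- Structured version of recursive majority. -/
def recMajS : ∀ k, (TIdx k → Bool) → Bool
  | 0, y => y ()
  | k + 1, y =>
    maj3 (recMajS k (fun t => y (Sum.inl t)))
      (recMajS k (fun t => y (Sum.inr (Sum.inl t))))
      (recMajS k (fun t => y (Sum.inr (Sum.inr t))))

def neg {β : Type*} (f : β → Bool) : β → Bool := fun i => !(f i)

lemma maj3_not (a b c : Bool) : maj3 (!a) (!b) (!c) = !(maj3 a b c) := by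
  cases a <;> cases b <;> cases c <;> rfl

lemma recMajS_neg : ∀ k (y : TIdx k → Bool), recMajS k (neg y) = !(recMajS k y)
  | 0, y => rfl
  | k + 1, y => by
    show maj3 _ _ _ = _
    rw [show (fun t => neg y (Sum.inl t)) = neg (fun t => y (Sum.inl t)) from rfl,
      show (fun t => neg y (Sum.inr (Sum.inl t))) = neg (fun t => y (Sum.inr (Sum.inl t))) from rfl,
      show (fun t => neg y (Sum.inr (Sum.inr t))) = neg (fun t => y (Sum.inr (Sum.inr t))) from rfl,
      recMajS_neg k, recMajS_neg k, recMajS_neg k, maj3_not]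
    rfl

lemma neg_injective {β : Type*} : Function.Injective (@neg β) := by
  intro f g h
  funext i
  have := congrFun h i
  simpa [neg] using this

/-- Hamming distance as a sum of indicators. -/
lemma hd_eq_sum {β : Type*} [Fintype β] (a b : β → Bool) :
    hammingDist a b = ∑ i, if a i ≠ b i then 1 else 0 := by
  rw [hammingDist, Finset.card_filter]

lemma hd_comp_equiv {γ δ : Type*} [Fintype γ] [Fintype δ] (g : γ ≃ δ) (A B : δ → Bool) :
    hammingDist (A ∘ g) (B ∘ g) = hammingDist A B := by
  rw [hd_eq_sum, hd_eq_sum]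
  exact Equiv.sum_comp g (fun i => if A i ≠ B i then 1 else 0)

lemma hd_sum_elim {α β : Type*} [Fintype α] [Fintype β]
    (a a' : α → Bool) (b b' : β → Bool) :
    hammingDist (Sum.elim a b) (Sum.elim a' b') = hammingDist a a' + hammingDist b b' := by
  rw [hd_eq_sum, hd_eq_sum, hd_eq_sum, Fintype.sum_sum_type]
  rfl

lemma hd_neg {β : Type*} [Fintype β] (a b : β → Bool) :
    hammingDist (neg a) (neg b) = hammingDist a b := by
  rw [hd_eq_sum, hd_eq_sum]
  congr 1
  funext i
  simp [neg]

lemma hd_update {β : Type*} [Fintype β] [DecidableEq β] (x : β → Bool) (i : β) (c : Bool) :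
    hammingDist x (Function.update x i c) ≤ 1 := by
  rw [hd_eq_sum]
  calc ∑ j, (if x j ≠ Function.update x i c j then 1 else 0)
      ≤ ∑ j, (if j = i then 1 else 0) := by
        apply Finset.sum_le_sum
        intro j _
        by_cases hj : j = i <;> simp [hj, Function.update] <;> split <;> simp
    _ = 1 := by simp

/-- The (unnormalized) total stretch of a map between cubes over arbitrary index types. -/
def stretchSum {α β : Type*} [Fintype α] [DecidableEq α] [Fintype β]
    (φ : (α → Bool) → (β → Bool)) : ℕ :=
  ∑ x : α → Bool, ∑ i : α, hammingDist (φ x) (φ (Function.update x i (!(x i))))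

/-- Splitting a sum over the cube on a sum type. -/
lemma sum_cube_sum {α β : Type*} [Fintype α] [DecidableEq α] [Fintype β] [DecidableEq β]
    (G : ((α ⊕ β) → Bool) → ℕ) :
    ∑ x : (α ⊕ β) → Bool, G x = ∑ p : α → Bool, ∑ q : β → Bool, G (Sum.elim p q) := by
  rw [← Equiv.sum_comp (Equiv.sumArrowEquivProdArrow α β Bool).symm G, Fintype.sum_prod_type]
  simp [Equiv.sumArrowEquivProdArrow]


lemma neg_neg {β : Type*} (f : β → Bool) : neg (neg f) = f := by
  funext i; simp [neg]

section Step

variable (k : ℕ)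

/-- A fixed equivalence `TIdx k ≃ SIdx k ⊕ Unit`. -/
noncomputable def ce : TIdx k ≃ (SIdx k ⊕ Unit) :=
  Fintype.equivOfCardEq (by
    have h1 : 1 ≤ 3 ^ k := Nat.one_le_pow _ _ (by norm_num)
    simp [card_TIdx, card_SIdx, Fintype.card_sum]
    omega)

variable {k}

/-- Accessors for the source cube at level `k+1`. -/
def uPart (z : SIdx (k + 1) → Bool) : SIdx k → Bool := fun s => z (Sum.inl s)
def vPart (z : SIdx (k + 1) → Bool) : SIdx k → Bool := fun s => z (Sum.inr (Sum.inl s))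
def wPart (z : SIdx (k + 1) → Bool) : TIdx k → Bool := fun t => z (Sum.inr (Sum.inr (Sum.inl t)))
def bPart (z : SIdx (k + 1) → Bool) : Bool := z (Sum.inr (Sum.inr (Sum.inr ())))

/-- The `SIdx k` part of a `w`-block. -/
noncomputable def wS (w : TIdx k → Bool) : SIdx k → Bool := fun s => w ((ce k).symm (Sum.inl s))
/-- The extra bit of a `w`-block. -/
noncomputable def cBit (w : TIdx k → Bool) : Bool := w ((ce k).symm (Sum.inr ()))

variable (φ : (SIdx k → Bool) → (TIdx k → Bool))

noncomputable def blk1 (z : SIdx (k + 1) → Bool) : TIdx k → Bool :=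
  cond (bPart z && cBit (wPart z)) (neg (φ (uPart z))) (φ (uPart z))
noncomputable def blk2 (z : SIdx (k + 1) → Bool) : TIdx k → Bool :=
  cond (bPart z && !cBit (wPart z)) (neg (φ (vPart z))) (φ (vPart z))
noncomputable def blk3 (z : SIdx (k + 1) → Bool) : TIdx k → Bool :=
  cond (bPart z) (φ (wS (wPart z))) (wPart z)

/-- The recursive step of the construction. -/
noncomputable def stepMap (z : SIdx (k + 1) → Bool) : TIdx (k + 1) → Bool :=
  Sum.elim (blk1 φ z) (Sum.elim (blk2 φ z) (blk3 φ z))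

lemma recMajS_succ (y : TIdx (k + 1) → Bool) :
    recMajS (k + 1) y =
      maj3 (recMajS k (fun t => y (Sum.inl t)))
        (recMajS k (fun t => y (Sum.inr (Sum.inl t))))
        (recMajS k (fun t => y (Sum.inr (Sum.inr t)))) := rfl

lemma recMajS_stepMap (z : SIdx (k + 1) → Bool) :
    recMajS (k + 1) (stepMap φ z) =
      maj3 (recMajS k (blk1 φ z)) (recMajS k (blk2 φ z)) (recMajS k (blk3 φ z)) := rfl

variable (hφ : ∀ x, recMajS k (φ x) = true)
include hφ

lemma recMajS_blk1 (z : SIdx (k + 1) → Bool) :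
    recMajS k (blk1 φ z) = !(bPart z && cBit (wPart z)) := by
  unfold blk1
  cases hbc : bPart z && cBit (wPart z) <;> simp [hφ, recMajS_neg]

lemma recMajS_blk2 (z : SIdx (k + 1) → Bool) :
    recMajS k (blk2 φ z) = !(bPart z && !cBit (wPart z)) := by
  unfold blk2
  cases hbc : bPart z && !cBit (wPart z) <;> simp [hφ, recMajS_neg]

lemma stepMap_mem (z : SIdx (k + 1) → Bool) : recMajS (k + 1) (stepMap φ z) = true := by
  rw [recMajS_stepMap, recMajS_blk1 φ hφ, recMajS_blk2 φ hφ]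
  unfold blk3
  cases hb : bPart z
  · cases hc : cBit (wPart z) <;> simp [maj3, hφ]
  · cases hc : cBit (wPart z) <;> simp [maj3, hφ]


/-- Packing components into a source point. -/
def mk (u v : SIdx k → Bool) (w : TIdx k → Bool) (b : Bool) : SIdx (k + 1) → Bool :=
  Sum.elim u (Sum.elim v (Sum.elim w (fun _ => b)))

omit hφ in
lemma wPart_eq {z z' : SIdx (k + 1) → Bool} (hS : wS (wPart z) = wS (wPart z'))
    (hC : cBit (wPart z) = cBit (wPart z')) : wPart z = wPart z' := by
  funext t
  rcases hj : (ce k) t with s | u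
  · have ht : t = (ce k).symm (Sum.inl s) := by rw [← hj]; simp
    rw [ht]
    exact congrFun hS s
  · cases u
    have ht : t = (ce k).symm (Sum.inr ()) := by rw [← hj]; simp
    rw [ht]
    exact hC

lemma stepMap_inj (hinj : Function.Injective φ) : Function.Injective (stepMap φ) := by
  intro z z' h
  have h1 : blk1 φ z = blk1 φ z' := funext fun t => congrFun h (Sum.inl t)
  have h2 : blk2 φ z = blk2 φ z' := funext fun t => congrFun h (Sum.inr (Sum.inl t))
  have h3 : blk3 φ z = blk3 φ z' := funext fun t => congrFun h (Sum.inr (Sum.inr t))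
  have e1 : (bPart z && cBit (wPart z)) = (bPart z' && cBit (wPart z')) := by
    have := congrArg (recMajS k) h1
    rw [recMajS_blk1 φ hφ, recMajS_blk1 φ hφ] at this
    exact Bool.not_inj this
  have e2 : (bPart z && !cBit (wPart z)) = (bPart z' && !cBit (wPart z')) := by
    have := congrArg (recMajS k) h2
    rw [recMajS_blk2 φ hφ, recMajS_blk2 φ hφ] at this
    exact Bool.not_inj this
  have hb : bPart z = bPart z' := by
    revert e1 e2
    cases bPart z <;> cases bPart z' <;> cases cBit (wPart z) <;> cases cBit (wPart z') <;>
      simp_all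
  have hu : uPart z = uPart z' := by
    apply hinj
    rcases hbc : (bPart z && cBit (wPart z)) with _ | _
    · rw [blk1, hbc] at h1; rw [blk1, ← e1, hbc] at h1; simpa using h1
    · apply neg_injective
      rw [blk1, hbc] at h1; rw [blk1, ← e1, hbc] at h1; simpa using h1
  have hv : vPart z = vPart z' := by
    apply hinj
    rcases hbc : (bPart z && !cBit (wPart z)) with _ | _
    · rw [blk2, hbc] at h2; rw [blk2, ← e2, hbc] at h2; simpa using h2
    · apply neg_injective
      rw [blk2, hbc] at h2; rw [blk2, ← e2, hbc] at h2; simpa using h2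
  have hw : wPart z = wPart z' := by
    rcases hbv : bPart z with _ | _
    · rw [blk3, hbv] at h3; rw [blk3, ← hb, hbv] at h3; simpa using h3
    · have hc : cBit (wPart z) = cBit (wPart z') := by
        revert e1 e2
        rw [← hb, hbv]
        cases cBit (wPart z) <;> cases cBit (wPart z') <;> simp_all
      apply wPart_eq _ hc
      apply hinj
      rw [blk3, hbv] at h3; rw [blk3, ← hb, hbv] at h3; simpa using h3
  funext i
  rcases i with s | i
  · exact congrFun hu s
  rcases i with s | i
  · exact congrFun hv s
  rcases i with t | u
  · exact congrFun hw t
  · cases u; exact hb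

lemma stepMap_surj (hsurj : ∀ y, recMajS k y = true → ∃ x, φ x = y) :
    ∀ y, recMajS (k + 1) y = true → ∃ z, stepMap φ z = y := by
  intro y hy
  rw [recMajS_succ] at hy
  set y1 := fun t => y (Sum.inl t) with hy1
  set y2 := fun t => y (Sum.inr (Sum.inl t)) with hy2
  set y3 := fun t => y (Sum.inr (Sum.inr t)) with hy3
  have hfin : ∀ z : SIdx (k + 1) → Bool,
      blk1 φ z = y1 → blk2 φ z = y2 → blk3 φ z = y3 → stepMap φ z = y := by
    intro z b1 b2 b3
    funext i
    rcases i with t | i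
    · exact congrFun b1 t
    rcases i with t | t
    · exact congrFun b2 t
    · exact congrFun b3 t
  cases hr1 : recMajS k y1 <;> cases hr2 : recMajS k y2 <;> cases hr3 : recMajS k y3 <;>
    rw [hr1, hr2, hr3] at hy <;> simp [maj3] at hy
  -- remaining: FTT, TFT, TTF, TTT (order of goals per cases: false first)
  · -- r1 = false, r2 = true, r3 = true
    obtain ⟨u, hu⟩ := hsurj (neg y1) (by rw [recMajS_neg, hr1]; rfl)
    obtain ⟨v, hv⟩ := hsurj y2 hr2
    obtain ⟨w0, hw0⟩ := hsurj y3 hr3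
    set w : TIdx k → Bool := fun t => Sum.elim w0 (fun _ => true) ((ce k) t) with hw
    have hcB : cBit w = true := by simp [cBit, hw]
    have hwS : wS w = w0 := funext fun s => by simp [wS, hw]
    refine ⟨mk u v w true, hfin _ ?_ ?_ ?_⟩
    · show cond _ _ _ = _
      rw [show bPart (mk u v w true) = true from rfl, show wPart (mk u v w true) = w from rfl,
        hcB, show uPart (mk u v w true) = u from rfl]
      simp [hu, neg_neg]
    · show cond _ _ _ = _
      rw [show bPart (mk u v w true) = true from rfl, show wPart (mk u v w true) = w from rfl,
        hcB, show vPart (mk u v w true) = v from rfl]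
      simpa using hv
    · show cond _ _ _ = _
      rw [show bPart (mk u v w true) = true from rfl, show wPart (mk u v w true) = w from rfl,
        hwS]
      simpa using hw0
  · -- r1 = true, r2 = false, r3 = true
    obtain ⟨u, hu⟩ := hsurj y1 hr1
    obtain ⟨v, hv⟩ := hsurj (neg y2) (by rw [recMajS_neg, hr2]; rfl)
    obtain ⟨w0, hw0⟩ := hsurj y3 hr3
    set w : TIdx k → Bool := fun t => Sum.elim w0 (fun _ => false) ((ce k) t) with hw
    have hcB : cBit w = false := by simp [cBit, hw]
    have hwS : wS w = w0 := funext fun s => by simp [wS, hw]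
    refine ⟨mk u v w true, hfin _ ?_ ?_ ?_⟩
    · show cond _ _ _ = _
      rw [show bPart (mk u v w true) = true from rfl, show wPart (mk u v w true) = w from rfl,
        hcB, show uPart (mk u v w true) = u from rfl]
      simpa using hu
    · show cond _ _ _ = _
      rw [show bPart (mk u v w true) = true from rfl, show wPart (mk u v w true) = w from rfl,
        hcB, show vPart (mk u v w true) = v from rfl]
      simp [hv, neg_neg]
    · show cond _ _ _ = _
      rw [show bPart (mk u v w true) = true from rfl, show wPart (mk u v w true) = w from rfl,
        hwS]
      simpa using hw0
  · -- r1 = true, r2 = true, r3 = false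
    obtain ⟨u, hu⟩ := hsurj y1 hr1
    obtain ⟨v, hv⟩ := hsurj y2 hr2
    refine ⟨mk u v y3 false, hfin _ ?_ ?_ ?_⟩
    · show cond _ _ _ = _
      rw [show bPart (mk u v y3 false) = false from rfl]
      exact hu
    · show cond _ _ _ = _
      rw [show bPart (mk u v y3 false) = false from rfl]
      exact hv
    · show cond _ _ _ = _
      rw [show bPart (mk u v y3 false) = false from rfl]
      rfl
  · -- r1 = true, r2 = true, r3 = true
    obtain ⟨u, hu⟩ := hsurj y1 hr1
    obtain ⟨v, hv⟩ := hsurj y2 hr2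
    refine ⟨mk u v y3 false, hfin _ ?_ ?_ ?_⟩
    · show cond _ _ _ = _
      rw [show bPart (mk u v y3 false) = false from rfl]
      exact hu
    · show cond _ _ _ = _
      rw [show bPart (mk u v y3 false) = false from rfl]
      exact hv
    · show cond _ _ _ = _
      rw [show bPart (mk u v y3 false) = false from rfl]
      rfl


omit hφ

/-! ### Update lemmas for accessors -/

variable {z : SIdx (k + 1) → Bool}

lemma uPart_upd_u (s : SIdx k) (c : Bool) :
    uPart (Function.update z (Sum.inl s) c) = Function.update (uPart z) s c :=
  Function.update_comp_eq_of_injective z Sum.inl_injective s c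

lemma vPart_upd_u (s : SIdx k) (c : Bool) :
    vPart (Function.update z (Sum.inl s) c) = vPart z :=
  funext fun s' => Function.update_of_ne (by intro h; repeat first | (injection h; done) | injection h with h) _ _

lemma wPart_upd_u (s : SIdx k) (c : Bool) :
    wPart (Function.update z (Sum.inl s) c) = wPart z :=
  funext fun t => Function.update_of_ne (by intro h; repeat first | (injection h; done) | injection h with h) _ _

lemma bPart_upd_u (s : SIdx k) (c : Bool) :
    bPart (Function.update z (Sum.inl s) c) = bPart z :=
  Function.update_of_ne (by intro h; repeat first | (injection h; done) | injection h with h) _ _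

lemma uPart_upd_v (s : SIdx k) (c : Bool) :
    uPart (Function.update z (Sum.inr (Sum.inl s)) c) = uPart z :=
  funext fun s' => Function.update_of_ne (by intro h; repeat first | (injection h; done) | injection h with h) _ _

lemma vPart_upd_v (s : SIdx k) (c : Bool) :
    vPart (Function.update z (Sum.inr (Sum.inl s)) c) = Function.update (vPart z) s c :=
  Function.update_comp_eq_of_injective z
    (Sum.inr_injective.comp Sum.inl_injective) s c

lemma wPart_upd_v (s : SIdx k) (c : Bool) :
    wPart (Function.update z (Sum.inr (Sum.inl s)) c) = wPart z :=
  funext fun t => Function.update_of_ne (by intro h; repeat first | (injection h; done) | injection h with h) _ _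

lemma bPart_upd_v (s : SIdx k) (c : Bool) :
    bPart (Function.update z (Sum.inr (Sum.inl s)) c) = bPart z :=
  Function.update_of_ne (by intro h; repeat first | (injection h; done) | injection h with h) _ _

lemma uPart_upd_w (t : TIdx k) (c : Bool) :
    uPart (Function.update z (Sum.inr (Sum.inr (Sum.inl t))) c) = uPart z :=
  funext fun s' => Function.update_of_ne (by intro h; repeat first | (injection h; done) | injection h with h) _ _

lemma vPart_upd_w (t : TIdx k) (c : Bool) :
    vPart (Function.update z (Sum.inr (Sum.inr (Sum.inl t))) c) = vPart z :=
  funext fun s' => Function.update_of_ne (by intro h; repeat first | (injection h; done) | injection h with h) _ _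

lemma wPart_upd_w (t : TIdx k) (c : Bool) :
    wPart (Function.update z (Sum.inr (Sum.inr (Sum.inl t))) c)
      = Function.update (wPart z) t c :=
  Function.update_comp_eq_of_injective z
    (Sum.inr_injective.comp (Sum.inr_injective.comp Sum.inl_injective)) t c

lemma bPart_upd_w (t : TIdx k) (c : Bool) :
    bPart (Function.update z (Sum.inr (Sum.inr (Sum.inl t))) c) = bPart z :=
  Function.update_of_ne (by intro h; repeat first | (injection h; done) | injection h with h) _ _

lemma uPart_upd_b (c : Bool) :
    uPart (Function.update z (Sum.inr (Sum.inr (Sum.inr ()))) c) = uPart z :=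
  funext fun s' => Function.update_of_ne (by intro h; repeat first | (injection h; done) | injection h with h) _ _

lemma vPart_upd_b (c : Bool) :
    vPart (Function.update z (Sum.inr (Sum.inr (Sum.inr ()))) c) = vPart z :=
  funext fun s' => Function.update_of_ne (by intro h; repeat first | (injection h; done) | injection h with h) _ _

lemma wPart_upd_b (c : Bool) :
    wPart (Function.update z (Sum.inr (Sum.inr (Sum.inr ()))) c) = wPart z :=
  funext fun t => Function.update_of_ne (by intro h; repeat first | (injection h; done) | injection h with h) _ _

/-! ### Lemmas about updating the `w`-block -/

lemma cBit_update_inl {t : TIdx k} {s : SIdx k} (hj : (ce k) t = Sum.inl s)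
    (w : TIdx k → Bool) (c : Bool) : cBit (Function.update w t c) = cBit w := by
  unfold cBit
  apply Function.update_of_ne
  intro h
  rw [← h] at hj
  simp at hj

lemma wS_update_inl {t : TIdx k} {s : SIdx k} (hj : (ce k) t = Sum.inl s)
    (w : TIdx k → Bool) (c : Bool) :
    wS (Function.update w t c) = Function.update (wS w) s c := by
  have ht : t = (ce k).symm (Sum.inl s) := by rw [← hj]; simp
  funext s'
  unfold wS
  by_cases h : s' = s
  · subst h
    rw [ht]
    simp
  · have hne : (ce k).symm (Sum.inl s') ≠ t := by
      rw [ht]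
      intro hh
      have h2 := (ce k).symm.injective hh
      injection h2 with h3
      exact h h3
    rw [Function.update_of_ne hne, Function.update_of_ne h]

lemma wS_apply_eq {t : TIdx k} {s : SIdx k} (hj : (ce k) t = Sum.inl s)
    (w : TIdx k → Bool) : wS w s = w t := by
  unfold wS
  rw [← hj, Equiv.symm_apply_apply]

/-! ### Distance lemmas -/

lemma hd_stepMap (z z' : SIdx (k + 1) → Bool) :
    hammingDist (stepMap φ z) (stepMap φ z') =
      hammingDist (blk1 φ z) (blk1 φ z') +
        (hammingDist (blk2 φ z) (blk2 φ z') + hammingDist (blk3 φ z) (blk3 φ z')) := by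
  unfold stepMap
  exact (hd_sum_elim (α := TIdx k) (β := TIdx k ⊕ TIdx k) _ _ _ _).trans (by rw [hd_sum_elim])

lemma hd_cond_neg (b : Bool) (f g : TIdx k → Bool) :
    hammingDist (cond b (neg f) f) (cond b (neg g) g) = hammingDist f g := by
  cases b
  · rfl
  · exact hd_neg f g

lemma dist_u (s : SIdx k) (c : Bool) :
    hammingDist (stepMap φ z) (stepMap φ (Function.update z (Sum.inl s) c)) =
      hammingDist (φ (uPart z)) (φ (Function.update (uPart z) s c)) := by
  rw [hd_stepMap]
  have h2 : blk2 φ (Function.update z (Sum.inl s) c) = blk2 φ z := by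
    unfold blk2; rw [vPart_upd_u, wPart_upd_u, bPart_upd_u]
  have h3 : blk3 φ (Function.update z (Sum.inl s) c) = blk3 φ z := by
    unfold blk3; rw [wPart_upd_u, bPart_upd_u]
  rw [h2, h3, hammingDist_self, hammingDist_self]
  unfold blk1
  rw [bPart_upd_u, wPart_upd_u, uPart_upd_u, hd_cond_neg]
  omega

lemma dist_v (s : SIdx k) (c : Bool) :
    hammingDist (stepMap φ z) (stepMap φ (Function.update z (Sum.inr (Sum.inl s)) c)) =
      hammingDist (φ (vPart z)) (φ (Function.update (vPart z) s c)) := by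
  rw [hd_stepMap]
  have h1 : blk1 φ (Function.update z (Sum.inr (Sum.inl s)) c) = blk1 φ z := by
    unfold blk1; rw [uPart_upd_v, wPart_upd_v, bPart_upd_v]
  have h3 : blk3 φ (Function.update z (Sum.inr (Sum.inl s)) c) = blk3 φ z := by
    unfold blk3; rw [wPart_upd_v, bPart_upd_v]
  rw [h1, h3, hammingDist_self, hammingDist_self]
  unfold blk2
  rw [bPart_upd_v, wPart_upd_v, vPart_upd_v, hd_cond_neg]
  simp

lemma dist_w_bfalse (hb : bPart z = false) (t : TIdx k) (c : Bool) :
    hammingDist (stepMap φ z) (stepMap φ (Function.update z (Sum.inr (Sum.inr (Sum.inl t))) c))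
      ≤ 1 := by
  rw [hd_stepMap]
  have h1 : blk1 φ (Function.update z (Sum.inr (Sum.inr (Sum.inl t))) c) = blk1 φ z := by
    unfold blk1; rw [uPart_upd_w, bPart_upd_w, hb]; simp
  have h2 : blk2 φ (Function.update z (Sum.inr (Sum.inr (Sum.inl t))) c) = blk2 φ z := by
    unfold blk2; rw [vPart_upd_w, bPart_upd_w, hb]; simp
  have h3 : blk3 φ (Function.update z (Sum.inr (Sum.inr (Sum.inl t))) c)
      = Function.update (wPart z) t c := by
    unfold blk3; rw [wPart_upd_w, bPart_upd_w, hb]; rfl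
  have h3' : blk3 φ z = wPart z := by unfold blk3; rw [hb]; rfl
  rw [h1, h2, h3, h3', hammingDist_self, hammingDist_self]
  simpa using hd_update (wPart z) t c

lemma dist_w_btrue_inl (hb : bPart z = true) {t : TIdx k} {s : SIdx k}
    (hj : (ce k) t = Sum.inl s) (c : Bool) :
    hammingDist (stepMap φ z) (stepMap φ (Function.update z (Sum.inr (Sum.inr (Sum.inl t))) c))
      = hammingDist (φ (wS (wPart z))) (φ (Function.update (wS (wPart z)) s c)) := by
  rw [hd_stepMap]
  have h1 : blk1 φ (Function.update z (Sum.inr (Sum.inr (Sum.inl t))) c) = blk1 φ z := by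
    unfold blk1; rw [uPart_upd_w, bPart_upd_w, wPart_upd_w, cBit_update_inl hj]
  have h2 : blk2 φ (Function.update z (Sum.inr (Sum.inr (Sum.inl t))) c) = blk2 φ z := by
    unfold blk2; rw [vPart_upd_w, bPart_upd_w, wPart_upd_w, cBit_update_inl hj]
  have h3 : blk3 φ (Function.update z (Sum.inr (Sum.inr (Sum.inl t))) c)
      = φ (Function.update (wS (wPart z)) s c) := by
    unfold blk3; rw [wPart_upd_w, bPart_upd_w, hb, wS_update_inl hj]; rfl
  have h3' : blk3 φ z = φ (wS (wPart z)) := by unfold blk3; rw [hb]; rfl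
  rw [h1, h2, h3, h3', hammingDist_self, hammingDist_self]
  omega

lemma dist_le (z z' : SIdx (k + 1) → Bool) :
    hammingDist (stepMap φ z) (stepMap φ z') ≤ 3 ^ (k + 1) :=
  le_of_le_of_eq hammingDist_le_card_fintype (card_TIdx (k + 1))


/-! ### Summation lemmas -/

/-- The inner stretch sum of `φ` at a fixed point. -/
noncomputable def Fsum (u : SIdx k → Bool) : ℕ :=
  ∑ s, hammingDist (φ u) (φ (Function.update u s (!(u s))))

lemma stretchSum_eq : stretchSum φ = ∑ u, Fsum φ u := rfl

lemma sum_cube_unit (G : (Unit → Bool) → ℕ) :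
    ∑ r : Unit → Bool, G r = G (fun _ => false) + G (fun _ => true) := by
  rw [← Equiv.sum_comp (Equiv.funUnique Unit Bool).symm G, Fintype.sum_bool]
  have h1 : (Equiv.funUnique Unit Bool).symm true = fun _ => true := rfl
  have h2 : (Equiv.funUnique Unit Bool).symm false = fun _ => false := rfl
  rw [h1, h2, Nat.add_comm]

lemma sum_cube_proj {α β : Type*} [Fintype α] [DecidableEq α] [Fintype β] [DecidableEq β]
    (G : (α → Bool) → ℕ) :
    ∑ z : (α ⊕ β) → Bool, G (fun a => z (Sum.inl a)) = 2 ^ Fintype.card β * ∑ p, G p := by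
  rw [sum_cube_sum (fun z => G (fun a => z (Sum.inl a)))]
  simp only [Sum.elim_inl]
  calc ∑ p : α → Bool, ∑ _q : β → Bool, G p
      = ∑ p : α → Bool, 2 ^ Fintype.card β * G p := by
        apply Finset.sum_congr rfl
        intro p _
        rw [Finset.sum_const, Finset.card_univ, Fintype.card_fun, Fintype.card_bool,
          smul_eq_mul]
    _ = _ := by rw [← Finset.mul_sum]

lemma sum_cube_proj_r {α β : Type*} [Fintype α] [DecidableEq α] [Fintype β] [DecidableEq β]
    (G : (β → Bool) → ℕ) :
    ∑ z : (α ⊕ β) → Bool, G (fun b => z (Sum.inr b)) = 2 ^ Fintype.card α * ∑ q, G q := by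
  rw [sum_cube_sum (fun z => G (fun b => z (Sum.inr b)))]
  simp only [Sum.elim_inr]
  calc ∑ _p : α → Bool, ∑ q : β → Bool, G q
      = ∑ _p : α → Bool, (1 : ℕ) * ∑ q, G q := by simp
    _ = _ := by
        rw [Finset.sum_const, Finset.card_univ, Fintype.card_fun, Fintype.card_bool,
          smul_eq_mul]
        ring

lemma sum_wS : ∑ w : TIdx k → Bool, Fsum φ (wS w) = 2 * stretchSum φ := by
  rw [← Equiv.sum_comp (Equiv.arrowCongr (ce k).symm (Equiv.refl Bool))
    (fun w => Fsum φ (wS w))]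
  have hws : ∀ w2 : (SIdx k ⊕ Unit) → Bool,
      wS ((Equiv.arrowCongr (ce k).symm (Equiv.refl Bool)) w2) = fun s => w2 (Sum.inl s) := by
    intro w2
    funext s
    simp [wS, Equiv.arrowCongr]
  simp only [hws]
  rw [sum_cube_proj (β := Unit) (Fsum φ), stretchSum_eq]
  norm_num

lemma sum_inner (z : (SIdx k ⊕ (SIdx k ⊕ (TIdx k ⊕ Unit))) → Bool) :
    ∑ i : SIdx k ⊕ (SIdx k ⊕ (TIdx k ⊕ Unit)),
      hammingDist (stepMap φ z) (stepMap φ (Function.update z i (!(z i))))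
    ≤ Fsum φ (uPart z) + Fsum φ (vPart z) +
        cond (bPart z) (Fsum φ (wS (wPart z)) + 3 ^ (k + 1)) (3 ^ k) + 3 ^ (k + 1) := by
  rw [Fintype.sum_sum_type, Fintype.sum_sum_type, Fintype.sum_sum_type]
  have h1 : ∑ s : SIdx k, hammingDist (stepMap φ z)
      (stepMap φ (Function.update z (Sum.inl s) (!(z (Sum.inl s))))) = Fsum φ (uPart z) := by
    apply Finset.sum_congr rfl
    intro s _
    exact dist_u φ s _
  have h2 : ∑ s : SIdx k, hammingDist (stepMap φ z)
      (stepMap φ (Function.update z (Sum.inr (Sum.inl s)) (!(z (Sum.inr (Sum.inl s))))))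
      = Fsum φ (vPart z) := by
    apply Finset.sum_congr rfl
    intro s _
    exact dist_v φ s _
  have h4 : ∑ u : Unit, hammingDist (stepMap φ z)
      (stepMap φ (Function.update z (Sum.inr (Sum.inr (Sum.inr u))) (!(z (Sum.inr (Sum.inr (Sum.inr u)))))))
      ≤ 3 ^ (k + 1) := by
    refine le_trans (Finset.sum_le_sum fun u _ => dist_le φ _ _) ?_
    simp
  have h3 : ∑ t : TIdx k, hammingDist (stepMap φ z)
      (stepMap φ (Function.update z (Sum.inr (Sum.inr (Sum.inl t))) (!(z (Sum.inr (Sum.inr (Sum.inl t)))))))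
      ≤ cond (bPart z) (Fsum φ (wS (wPart z)) + 3 ^ (k + 1)) (3 ^ k) := by
    cases hbv : bPart z
    · show _ ≤ (3 ^ k : ℕ)
      refine le_trans (Finset.sum_le_sum fun t _ => dist_w_bfalse φ hbv t _) ?_
      simp
      exact le_of_eq (card_TIdx k)
    · show _ ≤ Fsum φ (wS (wPart z)) + 3 ^ (k + 1)
      have hpt : ∀ t : TIdx k, hammingDist (stepMap φ z)
          (stepMap φ (Function.update z (Sum.inr (Sum.inr (Sum.inl t))) (!(z (Sum.inr (Sum.inr (Sum.inl t)))))))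
          ≤ Sum.elim
            (fun s => hammingDist (φ (wS (wPart z)))
              (φ (Function.update (wS (wPart z)) s (!(wS (wPart z) s)))))
            (fun _ : Unit => 3 ^ (k + 1)) ((ce k) t) := by
        intro t
        rcases hj : (ce k) t with s | u
        · rw [Sum.elim_inl, dist_w_btrue_inl φ hbv hj, wS_apply_eq hj]
          exact le_rfl
        · cases u
          rw [Sum.elim_inr]
          exact dist_le φ _ _
      refine le_trans (Finset.sum_le_sum fun t _ => hpt t) (le_of_eq ?_)
      rw [Equiv.sum_comp (ce k)
        (Sum.elim
          (fun s => hammingDist (φ (wS (wPart z)))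
            (φ (Function.update (wS (wPart z)) s (!(wS (wPart z) s)))))
          (fun _ : Unit => 3 ^ (k + 1)))]
      rw [Fintype.sum_sum_type]
      simp [Fsum]
  omega


lemma stretch_step (hT : stretchSum φ ≤ 20 * 2 ^ (3 ^ k - 1) * (3 ^ k - 1)) :
    stretchSum (α := SIdx k ⊕ (SIdx k ⊕ (TIdx k ⊕ Unit))) (stepMap φ)
      ≤ 20 * 2 ^ (3 ^ (k + 1) - 1) * (3 ^ (k + 1) - 1) := by
  have hstep1 : stretchSum (α := SIdx k ⊕ (SIdx k ⊕ (TIdx k ⊕ Unit))) (stepMap φ)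
      ≤ ∑ z : (SIdx k ⊕ (SIdx k ⊕ (TIdx k ⊕ Unit))) → Bool,
          (Fsum φ (uPart z) + Fsum φ (vPart z) +
            cond (bPart z) (Fsum φ (wS (wPart z)) + 3 ^ (k + 1)) (3 ^ k) + 3 ^ (k + 1)) :=
    Finset.sum_le_sum (fun z _ => sum_inner φ z)
  refine le_trans hstep1 ?_
  have hu : ∀ (p : SIdx k → Bool) (q : (SIdx k ⊕ (TIdx k ⊕ Unit)) → Bool),
      uPart (Sum.elim p q) = p := fun _ _ => rfl
  have hv : ∀ (p : SIdx k → Bool) (v : SIdx k → Bool) (rest : (TIdx k ⊕ Unit) → Bool),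
      vPart (Sum.elim p (Sum.elim v rest)) = v := fun _ _ _ => rfl
  have hw : ∀ (p v : SIdx k → Bool) (w : TIdx k → Bool) (r : Unit → Bool),
      wPart (Sum.elim p (Sum.elim v (Sum.elim w r))) = w := fun _ _ _ _ => rfl
  have hb : ∀ (p v : SIdx k → Bool) (w : TIdx k → Bool) (r : Unit → Bool),
      bPart (Sum.elim p (Sum.elim v (Sum.elim w r))) = r () := fun _ _ _ _ => rfl
  simp only [sum_cube_sum]
  simp only [hu, hv, hw, hb]
  simp only [sum_cube_unit, Bool.cond_false, Bool.cond_true]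
  simp only [Finset.sum_add_distrib, Finset.sum_const, Finset.card_univ, Fintype.card_fun,
    Fintype.card_bool, smul_eq_mul, sum_wS]
  simp only [← Finset.mul_sum]
  rw [← stretchSum_eq]
  rw [card_SIdx k, card_TIdx k]
  have h1 : 1 ≤ 3 ^ k := Nat.one_le_pow _ _ (by norm_num)
  have hp3 : (3:ℕ) ^ (k + 1) = 3 * 3 ^ k := by rw [pow_succ]; ring
  have hp4 : (2:ℕ) ^ (3 ^ (k + 1) - 1) = 4 * (2 ^ (3 ^ k - 1)) ^ 3 := by
    have he : 3 ^ (k + 1) - 1 = (3 ^ k - 1) * 3 + 2 := by rw [hp3]; omega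
    rw [he, pow_add, pow_mul]; ring
  have hp2 : (2:ℕ) ^ (3 ^ k) = 2 * 2 ^ (3 ^ k - 1) := by
    conv_lhs => rw [show 3 ^ k = (3 ^ k - 1) + 1 by omega]
    rw [pow_succ]; ring
  rw [hp4, hp3, hp2]
  set a := 3 ^ k - 1 with ha
  set E := (2:ℕ) ^ a with hE
  have h3k : (3:ℕ) ^ k = a + 1 := by omega
  rw [h3k]
  rw [show 3 * (a + 1) - 1 = 3 * a + 2 by omega]
  set T := stretchSum φ with hTT
  have key : E * E * T ≤ E * E * (20 * E * a) := Nat.mul_le_mul_left _ hT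
  nlinarith [key]

end Step

lemma stretchSum_congr_inst {α β : Type*} (I1 I2 : Fintype α) (D1 D2 : DecidableEq α)
    (J1 J2 : Fintype β) (φ : (α → Bool) → (β → Bool)) :
    @stretchSum α β I1 D1 J1 φ = @stretchSum α β I2 D2 J2 φ := by
  have hI : I1 = I2 := Subsingleton.elim _ _
  have hD : D1 = D2 := by
    funext a b
    exact Subsingleton.elim _ _
  have hJ : J1 = J2 := Subsingleton.elim _ _
  subst hI
  subst hD
  subst hJ
  rfl

/-- The main structured construction. -/
theorem main (k : ℕ) : ∃ φ : (SIdx k → Bool) → (TIdx k → Bool),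
    (∀ x, recMajS k (φ x) = true) ∧ Function.Injective φ ∧
    (∀ y, recMajS k y = true → ∃ x, φ x = y) ∧
    stretchSum φ ≤ 20 * 2 ^ (3 ^ k - 1) * (3 ^ k - 1) := by
  induction k with
  | zero =>
    refine ⟨fun _ _ => true, fun x => rfl, ?_, ?_, ?_⟩
    · intro x y _
      funext s
      exact Empty.elim s
    · intro y hy
      refine ⟨fun s => Empty.elim s, ?_⟩
      funext t
      exact (hy : y () = true).symm
    · have h0 : stretchSum (fun (_ : SIdx 0 → Bool) (_ : TIdx 0) => true) = 0 :=
        Finset.sum_eq_zero fun x _ => Finset.sum_eq_zero fun i _ => Empty.elim i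
      rw [h0]
      exact Nat.zero_le _
  | succ k ih =>
    obtain ⟨φ, hmem, hinj, hsurj, hT⟩ := ih
    refine ⟨stepMap φ, stepMap_mem φ hmem, stepMap_inj φ hmem hinj,
      stepMap_surj φ hmem hsurj, ?_⟩
    exact le_trans (le_of_eq (stretchSum_congr_inst _ _ _ _ _ _ (stepMap φ)))
      (stretch_step φ hT)

/-- The explicit identification of `TIdx k` with `Fin (3^k)` respecting the block
structure. -/
def fT : ∀ k, TIdx k → Fin (3 ^ k)
  | 0, _ => ⟨0, by norm_num⟩
  | k + 1, t =>
    match t with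
    | Sum.inl t => ⟨(fT k t).val, by
        have h1 := (fT k t).isLt
        have h3 : (3:ℕ) ^ (k + 1) = 3 * 3 ^ k := by rw [pow_succ]; ring
        omega⟩
    | Sum.inr (Sum.inl t) => ⟨3 ^ k + (fT k t).val, by
        have h1 := (fT k t).isLt
        have h3 : (3:ℕ) ^ (k + 1) = 3 * 3 ^ k := by rw [pow_succ]; ring
        omega⟩
    | Sum.inr (Sum.inr t) => ⟨2 * 3 ^ k + (fT k t).val, by
        have h1 := (fT k t).isLt
        have h3 : (3:ℕ) ^ (k + 1) = 3 * 3 ^ k := by rw [pow_succ]; ring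
        omega⟩

lemma fT_inj : ∀ k, Function.Injective (fT k)
  | 0 => fun _ _ _ => rfl
  | k + 1 => by
    intro t t' h
    rcases t with t | t | t <;> rcases t' with t' | t' | t' <;>
      simp only [fT, Fin.mk.injEq] at h <;>
      [skip; skip; skip; skip; skip; skip; skip; skip; skip] <;>
      first
        | (exact absurd h (by have := (fT k t).isLt; have := (fT k t').isLt; omega))
        | (first
            | exact congrArg Sum.inl (fT_inj k (Fin.ext (by omega)))
            | exact congrArg (fun a => Sum.inr (Sum.inl a)) (fT_inj k (Fin.ext (by omega)))
            | exact congrArg (fun a => Sum.inr (Sum.inr a)) (fT_inj k (Fin.ext (by omega))))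

lemma fT_bij (k : ℕ) : Function.Bijective (fT k) :=
  (Fintype.bijective_iff_injective_and_card (fT k)).mpr
    ⟨fT_inj k, by rw [card_TIdx, Fintype.card_fin]⟩

lemma recMaj_compat : ∀ (k : ℕ) (x : Fin (3 ^ k) → Bool),
    recMaj k x = recMajS k (fun t => x (fT k t))
  | 0, x => rfl
  | k + 1, x => by
    show maj3 _ _ _ = maj3 _ _ _
    congr 1
    · show recMaj k _ = _
      rw [recMaj_compat k]
      apply congrArg (recMajS k)
      funext t
      apply congrArg x
      apply Fin.ext
      simp [fT]
    · show recMaj k _ = _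
      rw [recMaj_compat k]
      apply congrArg (recMajS k)
      funext t
      apply congrArg x
      apply Fin.ext
      simp [fT]
    · show recMaj k _ = _
      rw [recMaj_compat k]
      apply congrArg (recMajS k)
      funext t
      apply congrArg x
      apply Fin.ext
      simp [fT]

lemma stretchSum_conj {α α' β β' : Type*} [Fintype α] [DecidableEq α] [Fintype α']
    [DecidableEq α'] [Fintype β] [Fintype β']
    (φ : (α → Bool) → (β → Bool)) (e : α ≃ α') (f : β ≃ β') :
    stretchSum (fun (x : α' → Bool) (j : β') => φ (fun s => x (e s)) (f.symm j))
      = stretchSum φ := by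
  unfold stretchSum
  rw [← Equiv.sum_comp (Equiv.arrowCongr e (Equiv.refl Bool))
    (fun x : α' → Bool => ∑ i : α', hammingDist
      (fun j : β' => φ (fun s => x (e s)) (f.symm j))
      (fun j : β' => φ (fun s => Function.update x i (!(x i)) (e s)) (f.symm j)))]
  apply Finset.sum_congr rfl
  intro z _
  rw [← Equiv.sum_comp e]
  apply Finset.sum_congr rfl
  intro s _
  have hz : (fun s' => (Equiv.arrowCongr e (Equiv.refl Bool)) z (e s')) = z := by
    funext s'
    simp [Equiv.arrowCongr]
  have hzu : ∀ c : Bool, (fun s' => Function.update ((Equiv.arrowCongr e (Equiv.refl Bool)) z)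
      (e s) c (e s')) = Function.update z s c := by
    intro c
    have h1 := Function.update_comp_eq_of_injective
      ((Equiv.arrowCongr e (Equiv.refl Bool)) z) e.injective s c
    calc (fun s' => Function.update ((Equiv.arrowCongr e (Equiv.refl Bool)) z) (e s) c (e s'))
        = Function.update ((Equiv.arrowCongr e (Equiv.refl Bool)) z) (e s) c ∘ e := rfl
      _ = Function.update ((Equiv.arrowCongr e (Equiv.refl Bool)) z ∘ e) s c := h1
      _ = Function.update z s c := by rw [show (Equiv.arrowCongr e (Equiv.refl Bool)) z ∘ e = z from hz]
  have hc : (Equiv.arrowCongr e (Equiv.refl Bool)) z (e s) = z s := congrFun hz s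
  rw [hz, hzu, hc]
  exact hd_comp_equiv f.symm (φ z) (φ (Function.update z s (!(z s))))

end Stmt17Aux

/-- For `n = 3^k` there is a bijection `φ : {0,1}^{n-1} → A_k = RecMaj_k^{-1}(1)`
with average stretch at most `20`. -/
theorem stmt17 (k : ℕ) (hk : 0 < k) :
    ∃ φ : (Fin (3 ^ k - 1) → Bool) → (Fin (3 ^ k) → Bool),
      Set.BijOn φ Set.univ {x | recMaj k x = true} ∧
      avgStretch (3 ^ k - 1) φ ≤ 20 := by

  classical
  obtain ⟨φS, hmem, hinj, hsurj, hT⟩ := Stmt17Aux.main k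
  have hcard : Fintype.card (Stmt17Aux.SIdx k) = Fintype.card (Fin (3 ^ k - 1)) := by
    rw [Stmt17Aux.card_SIdx, Fintype.card_fin]
  let es : Stmt17Aux.SIdx k ≃ Fin (3 ^ k - 1) := Fintype.equivOfCardEq hcard
  let eT : Stmt17Aux.TIdx k ≃ Fin (3 ^ k) := Equiv.ofBijective _ (Stmt17Aux.fT_bij k)
  have heTs : ∀ t, eT.symm (Stmt17Aux.fT k t) = t := fun t => eT.symm_apply_apply t
  let Φ : (Fin (3 ^ k - 1) → Bool) → (Fin (3 ^ k) → Bool) :=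
    fun xf i => φS (fun s => xf (es s)) (eT.symm i)
  refine ⟨Φ, ⟨?_, ?_, ?_⟩, ?_⟩
  · -- MapsTo
    intro xf _
    show recMaj k _ = true
    rw [Stmt17Aux.recMaj_compat k]
    have h5 : (fun t => Φ xf (Stmt17Aux.fT k t)) = φS (fun s => xf (es s)) := by
      funext t
      show φS (fun s => xf (es s)) (eT.symm (Stmt17Aux.fT k t)) = _
      rw [heTs]
    rw [h5]
    exact hmem _
  · -- InjOn
    intro x1 _ x2 _ h
    have h2 : φS (fun s => x1 (es s)) = φS (fun s => x2 (es s)) := by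
      funext t
      have h3 := congrFun h (eT t)
      rw [show t = eT.symm (eT t) from (eT.symm_apply_apply t).symm]
      exact h3
    have h3 := hinj h2
    funext j
    have h4 := congrFun h3 (es.symm j)
    simpa using h4
  · -- SurjOn
    intro y hy
    have hyS : Stmt17Aux.recMajS k (fun t => y (Stmt17Aux.fT k t)) = true := by
      rw [← Stmt17Aux.recMaj_compat k]
      exact hy
    obtain ⟨xs, hxs⟩ := hsurj _ hyS
    refine ⟨fun j => xs (es.symm j), Set.mem_univ _, ?_⟩
    have hxx : (fun s => xs (es.symm (es s))) = xs := by
      funext s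
      rw [Equiv.symm_apply_apply]
    show (fun i => φS (fun s => xs (es.symm (es s))) (eT.symm i)) = y
    rw [hxx, hxs]
    funext i
    show y (Stmt17Aux.fT k (eT.symm i)) = y i
    exact congrArg y (eT.apply_symm_apply i)
  · -- avgStretch bound
    have hS : Stmt17Aux.stretchSum Φ = Stmt17Aux.stretchSum φS :=
      Stmt17Aux.stretchSum_conj φS es eT
    have hpos : (0 : ℝ) < 2 ^ (3 ^ k - 1) * ((3 ^ k - 1 : ℕ) : ℝ) := by
      have h3 : 3 ≤ 3 ^ k := by
        calc (3:ℕ) = 3 ^ 1 := by norm_num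
          _ ≤ 3 ^ k := Nat.pow_le_pow_right (by norm_num) hk
      have h4 : 0 < 3 ^ k - 1 := by omega
      positivity
    rw [avgStretch, div_le_iff₀ hpos]
    have hcast : (∑ x : Fin (3 ^ k - 1) → Bool, ∑ i : Fin (3 ^ k - 1),
        (hammingDist (Φ x) (Φ (Function.update x i (!(x i)))) : ℝ))
        = ((Stmt17Aux.stretchSum Φ : ℕ) : ℝ) := by
      rw [Stmt17Aux.stretchSum]
      push_cast
      rfl
    rw [hcast, hS]
    calc ((Stmt17Aux.stretchSum φS : ℕ) : ℝ)
        ≤ ((20 * 2 ^ (3 ^ k - 1) * (3 ^ k - 1) : ℕ) : ℝ) := Nat.cast_le.mpr hT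
      _ = 20 * (2 ^ (3 ^ k - 1) * ((3 ^ k - 1 : ℕ) : ℝ)) := by
          push_cast
          ring
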